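/- Let α < 0 < β, 0 < ε < 8/(β−α), N ∈ ℕ, x_N := (N + 1/4)ε, δ ∈ (ε/2, ε), and v_δ := ((ε/2)β + (δ − ε/2)α)/δ. Then the function n(x) := 1 + v_δ(x − x_N) − ∫_{x_N}^x g(s/ε) ds satisfies n(x_N + δ) = 1 and −1 ≤ n(x) ≤ 1 for every x ∈ [x_N, x_N + δ]; in particular the edge [x_N, x_N + δ] with endpoint values n(x_N) = n(x_N + δ) = 1 (a zero-curvature horizontal edge with left endpoint on the interface ε(1/4 + ℤ)) is calibrable with velocity v_δ. -/

import Mathlib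

open MeasureTheory Set

/-- The 1-periodic forcing term: `α` within distance `1/4` of the integers, `β` otherwise. -/
noncomputable def g (α β x : ℝ) : ℝ := if |x - (round x : ℝ)| ≤ 1/4 then α else β

/-- The edge `[p,q]` with endpoint values `a`, `b` is calibrated with velocity `v` by the
Lipschitz field `n : [p,q] → [-1,1]` satisfying `n' = v - g(·/ε)` a.e. on `[p,q]`. -/
def Calibrates (α β ε p q a b v : ℝ) (n : ℝ → ℝ) : Prop :=
  (∃ K : NNReal, LipschitzOnWith K n (Icc p q)) ∧
  (∀ x ∈ Icc p q, n x ∈ Icc (-1 : ℝ) 1) ∧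
  n p = a ∧ n q = b ∧
  ∀ᵐ x ∂(volume.restrict (Icc p q)), HasDerivAt n (v - g α β (x / ε)) x

lemma g_eq_beta (α β : ℝ) (m : ℤ) (t : ℝ) (h1 : (m : ℝ) + 1/4 < t) (h2 : t < (m : ℝ) + 3/4) :
    g α β t = β := by
  have hr : round t = m ∨ round t = m + 1 := by
    rcases lt_or_ge t ((m : ℝ) + 1/2) with h | h
    · left
      rw [round_eq, Int.floor_eq_iff]
      constructor <;> push_cast <;> linarith
    · right
      rw [round_eq, Int.floor_eq_iff]
      constructor <;> push_cast <;> linarith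
  unfold g
  rw [if_neg]
  rw [not_le]
  rcases hr with h | h <;> rw [h]
  · rw [abs_of_nonneg (by linarith)]; linarith
  · push_cast
    rw [abs_of_nonpos (by linarith)]; linarith

lemma g_eq_alpha (α β : ℝ) (m : ℤ) (t : ℝ) (h1 : (m : ℝ) + 3/4 < t) (h2 : t < (m : ℝ) + 5/4) :
    g α β t = α := by
  have hr : round t = m + 1 := by
    rw [round_eq, Int.floor_eq_iff]
    constructor <;> push_cast <;> linarith
  unfold g
  rw [if_pos]
  rw [hr]
  push_cast
  rw [abs_le]
  constructor <;> linarith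

set_option maxHeartbeats 1600000 in
theorem stmt16 (α β ε δ v xN : ℝ) (N : ℕ) (hα : α < 0) (hβ : 0 < β)
    (hε0 : 0 < ε) (hε : ε < 8 / (β - α))
    (hxN : xN = (N + 1/4) * ε) (hδ1 : ε / 2 < δ) (hδ2 : δ < ε)
    (hv : v = (ε / 2 * β + (δ - ε / 2) * α) / δ)
    (n : ℝ → ℝ) (hn : n = fun x => 1 + v * (x - xN) - ∫ s in xN..x, g α β (s / ε)) :
    n (xN + δ) = 1 ∧ (∀ x ∈ Icc xN (xN + δ), -1 ≤ n x ∧ n x ≤ 1) ∧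
    Calibrates α β ε xN (xN + δ) 1 1 v n := by
  have hβα : 0 < β - α := by linarith
  have hεβα : ε * (β - α) < 8 := (lt_div_iff₀ hβα).1 hε
  have hδ0 : (0 : ℝ) < δ := lt_trans (by linarith) hδ1
  obtain ⟨c, hc⟩ : ∃ c : ℝ, c = xN + ε / 2 := ⟨_, rfl⟩
  have hcδ : c < xN + δ := by rw [hc]; linarith
  have hxNc : xN ≤ c := by rw [hc]; linarith
  have hvδ : v * δ = ε / 2 * β + (δ - ε / 2) * α := by
    rw [hv]; field_simp
  have h1vδ : (β - v) * δ = (δ - ε / 2) * (β - α) := by linear_combination -hvδ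
  have h2vδ : (v - α) * δ = ε / 2 * (β - α) := by linear_combination hvδ
  have hvβ : v ≤ β := by nlinarith [mul_pos (show (0:ℝ) < δ - ε/2 by linarith) hβα]
  have hvα : α ≤ v := by nlinarith [mul_pos (show (0:ℝ) < ε/2 by linarith) hβα]
  have hkey : (β - v) * ε < 4 := by
    nlinarith [mul_pos (show (0:ℝ) < ε - δ by linarith) (mul_pos hε0 hβα),
      mul_pos hδ0 (show (0:ℝ) < 8 - ε * (β - α) by linarith), h1vδ, mul_pos hδ0 hε0]
  obtain ⟨φ, hφ⟩ : ∃ φ : ℝ → ℝ, φ = fun s => if s ≤ c then β else α := ⟨_, rfl⟩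
  have hφmeas : Measurable φ := by
    rw [hφ]; exact Measurable.ite measurableSet_Iic measurable_const measurable_const
  have hφint : ∀ a b : ℝ, IntervalIntegrable φ volume a b := by
    intro a b
    rw [intervalIntegrable_iff]
    apply Measure.integrableOn_of_bounded (M := |β| + |α|) measure_Ioc_lt_top.ne
      hφmeas.aestronglyMeasurable
    filter_upwards with s
    rw [Real.norm_eq_abs]
    simp only [hφ]
    split_ifs
    · linarith [abs_nonneg α]
    · linarith [abs_nonneg β]
  have key : ∀ s : ℝ, xN < s → s ≤ xN + δ → s ≠ c → g α β (s / ε) = φ s := by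
    intro s hs1 hs2 hs3
    rcases lt_or_gt_of_ne hs3 with h | h
    · simp only [hφ]; rw [if_pos h.le]
      apply g_eq_beta α β (N : ℤ)
      · push_cast
        rw [lt_div_iff₀ hε0]
        nlinarith [hs1, hxN]
      · push_cast
        rw [div_lt_iff₀ hε0]
        have : ((N : ℝ) + 3/4) * ε = c := by rw [hc, hxN]; ring
        linarith [h]
    · simp only [hφ]; rw [if_neg (not_le.2 h)]
      apply g_eq_alpha α β (N : ℤ)
      · push_cast
        rw [lt_div_iff₀ hε0]
        have : ((N : ℝ) + 3/4) * ε = c := by rw [hc, hxN]; ring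
        linarith [h]
      · push_cast
        rw [div_lt_iff₀ hε0]
        have : ((N : ℝ) + 5/4) * ε = xN + ε := by rw [hxN]; ring
        linarith
  obtain ⟨H, hH⟩ : ∃ H : ℝ → ℝ,
      H = fun x => if x ≤ c then β * (x - xN) else ε / 2 * β + α * (x - c) := ⟨_, rfl⟩
  have hInt : ∀ x ∈ Icc xN (xN + δ), (∫ s in xN..x, g α β (s / ε)) = H x := by
    rintro x ⟨hx1, hx2⟩
    have hcongr : (∫ s in xN..x, g α β (s / ε)) = ∫ s in xN..x, φ s := by
      apply intervalIntegral.integral_congr_ae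
      have hc0 : ∀ᵐ s : ℝ, s ≠ c := by
        rw [ae_iff]
        simpa [not_not, setOf_eq_eq_singleton] using measure_singleton c
      filter_upwards [hc0] with s hs hmem
      rw [uIoc_of_le hx1] at hmem
      exact key s hmem.1 (hmem.2.trans hx2) hs
    rw [hcongr]
    rcases le_or_gt x c with h | h
    · have heq : EqOn φ (fun _ => β) (uIcc xN x) := by
        intro s hs
        rw [uIcc_of_le hx1] at hs
        simp only [hφ]
        exact if_pos (hs.2.trans h)
      rw [intervalIntegral.integral_congr heq, intervalIntegral.integral_const, smul_eq_mul]
      simp only [hH]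
      rw [if_pos h]; ring
    · rw [← intervalIntegral.integral_add_adjacent_intervals (hφint xN c) (hφint c x)]
      have h1 : (∫ s in xN..c, φ s) = β * (c - xN) := by
        have heq : EqOn φ (fun _ => β) (uIcc xN c) := by
          intro s hs
          rw [uIcc_of_le hxNc] at hs
          simp only [hφ]
          exact if_pos hs.2
        rw [intervalIntegral.integral_congr heq, intervalIntegral.integral_const, smul_eq_mul,
          mul_comm]
      have h2 : (∫ s in c..x, φ s) = α * (x - c) := by
        have heq : (∫ s in c..x, φ s) = ∫ s in c..x, (fun _ => α) s := by
          apply intervalIntegral.integral_congr_ae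
          filter_upwards with s hs
          rw [uIoc_of_le h.le] at hs
          simp only [hφ]
          exact if_neg (not_le.2 hs.1)
        rw [heq, intervalIntegral.integral_const, smul_eq_mul, mul_comm]
      rw [h1, h2]
      simp only [hH]
      rw [if_neg (not_le.2 h)]
      have : c - xN = ε / 2 := by rw [hc]; ring
      rw [this]; ring
  have hnH : ∀ x ∈ Icc xN (xN + δ), n x = 1 + v * (x - xN) - H x := by
    intro x hx
    rw [hn]
    dsimp only
    rw [hInt x hx]
  have hmem_end : xN + δ ∈ Icc xN (xN + δ) := ⟨by linarith, le_refl _⟩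
  have hend : n (xN + δ) = 1 := by
    rw [hnH _ hmem_end]
    simp only [hH]
    rw [if_neg (not_le.2 hcδ), hc]
    linear_combination hvδ
  have hbnd : ∀ x ∈ Icc xN (xN + δ), -1 ≤ n x ∧ n x ≤ 1 := by
    rintro x ⟨hx1, hx2⟩
    rw [hnH x ⟨hx1, hx2⟩]
    simp only [hH]
    rcases le_or_gt x c with h | h
    · rw [if_pos h]
      have hxc : x ≤ xN + ε / 2 := by rw [hc] at h; exact h
      constructor
      · nlinarith [mul_nonneg (sub_nonneg.2 hvβ) (show (0:ℝ) ≤ xN + ε/2 - x by linarith),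
          hkey, mul_nonneg (sub_nonneg.2 hvβ) (sub_nonneg.2 hx1)]
      · nlinarith [mul_nonneg (sub_nonneg.2 hvβ) (sub_nonneg.2 hx1)]
    · rw [if_neg (not_le.2 h)]
      have hxc : xN + ε / 2 < x := by rw [hc] at h; exact h
      have hc' : c = xN + ε / 2 := hc
      constructor
      · nlinarith [mul_nonneg (sub_nonneg.2 hvα) (show (0:ℝ) ≤ x - c by linarith),
          hkey, hc', hvδ]
      · nlinarith [mul_nonneg (sub_nonneg.2 hvα) (show (0:ℝ) ≤ xN + δ - x by linarith),
          hc', hvδ]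
  refine ⟨hend, hbnd, ?_, fun x hx => hbnd x hx, ?_, hend, ?_⟩
  · -- Lipschitz
    refine ⟨⟨|v| + |α| + |β|, by positivity⟩, ?_⟩
    apply LipschitzOnWith.of_dist_le_mul
    intro x hx y hy
    rw [Real.dist_eq, Real.dist_eq, hnH x hx, hnH y hy]
    have hHlip : |H x - H y| ≤ (|α| + |β|) * |x - y| := by
      have habs : ∀ a b : ℝ, a ≤ c → c < b →
          |H a - H b| ≤ (|α| + |β|) * |a - b| := by
        intro a b ha hb
        have e : H a - H b = β * (a - c) - α * (b - c) := by
          simp only [hH]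
          rw [if_pos ha, if_neg (not_le.2 hb), hc]
          ring
        rw [e]
        have h1 : |β * (a - c)| = |β| * (c - a) := by
          rw [abs_mul, abs_of_nonpos (show a - c ≤ 0 by linarith)]; ring
        have h2 : |α * (b - c)| = |α| * (b - c) := by
          rw [abs_mul, abs_of_nonneg (show (0:ℝ) ≤ b - c by linarith)]
        have h3 : |a - b| = b - a := by rw [abs_of_nonpos (show a - b ≤ 0 by linarith)]; ring
        calc |β * (a - c) - α * (b - c)| ≤ |β * (a - c)| + |α * (b - c)| := abs_sub _ _
          _ ≤ (|α| + |β|) * |a - b| := by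
              rw [h1, h2, h3]
              nlinarith [abs_nonneg α, abs_nonneg β]
      rcases le_or_gt x c with hxc' | hxc' <;> rcases le_or_gt y c with hyc' | hyc'
      · have e : H x - H y = β * (x - y) := by
          rw [hH]; dsimp only; rw [if_pos hxc', if_pos hyc']; ring
        rw [e, abs_mul]
        nlinarith [abs_nonneg α, abs_nonneg (x - y), abs_nonneg β]
      · exact habs x y hxc' hyc'
      · rw [abs_sub_comm (H x), abs_sub_comm x]
        exact habs y x hyc' hxc'
      · have e : H x - H y = α * (x - y) := by
          rw [hH]; dsimp only; rw [if_neg (not_le.2 hxc'), if_neg (not_le.2 hyc')]; ring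
        rw [e, abs_mul]
        nlinarith [abs_nonneg β, abs_nonneg (x - y), abs_nonneg α]
    have e2 : 1 + v * (x - xN) - H x - (1 + v * (y - xN) - H y)
        = v * (x - y) - (H x - H y) := by ring
    rw [e2]
    show _ ≤ (|v| + |α| + |β|) * |x - y|
    calc |v * (x - y) - (H x - H y)| ≤ |v * (x - y)| + |H x - H y| := abs_sub _ _
      _ ≤ (|v| + |α| + |β|) * |x - y| := by
          rw [abs_mul]
          nlinarith [abs_nonneg (x - y)]
  · -- n xN = 1
    rw [hnH xN ⟨le_refl _, by linarith⟩]
    simp only [hH]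
    rw [if_pos hxNc]
    ring
  · -- a.e. derivative
    have hae1 : ∀ᵐ x ∂(volume.restrict (Icc xN (xN + δ))), x ∈ Icc xN (xN + δ) :=
      ae_restrict_mem measurableSet_Icc
    have hbad : ∀ᵐ x : ℝ, x ∉ ({xN, c, xN + δ} : Set ℝ) :=
      measure_eq_zero_iff_ae_notMem.1
        ((((Set.finite_singleton (xN + δ)).insert c).insert xN).measure_zero _)
    filter_upwards [hae1, ae_restrict_of_ae hbad] with x hx hx'
    simp only [Set.mem_insert_iff, Set.mem_singleton_iff, not_or] at hx'
    obtain ⟨hne1, hnec, hne2⟩ := hx'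
    have hxl : xN < x := lt_of_le_of_ne hx.1 (Ne.symm hne1)
    have hxr : x < xN + δ := lt_of_le_of_ne hx.2 hne2
    have hgφ := key x hxl hxr.le hnec
    rcases lt_or_gt_of_ne hnec with h | h
    · simp only [hφ] at hgφ
      rw [if_pos h.le] at hgφ
      rw [hgφ]
      have hd1 : HasDerivAt (fun y : ℝ => y - xN) 1 x := (hasDerivAt_id x).sub_const xN
      have hlin : HasDerivAt (fun y => 1 + v * (y - xN) - β * (y - xN)) (v - β) x := by
        have := ((hd1.const_mul v).const_add 1).sub (hd1.const_mul β)
        simp only [mul_one] at this; exact this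
      apply hlin.congr_of_eventuallyEq
      filter_upwards [Ioo_mem_nhds hxl h] with y hy
      rw [hnH y ⟨hy.1.le, by linarith [hy.2, hcδ]⟩]
      simp only [hH]
      rw [if_pos hy.2.le]
    · simp only [hφ] at hgφ
      rw [if_neg (not_le.2 h)] at hgφ
      rw [hgφ]
      have hd1 : HasDerivAt (fun y : ℝ => y - xN) 1 x := (hasDerivAt_id x).sub_const xN
      have hd2 : HasDerivAt (fun y : ℝ => y - c) 1 x := (hasDerivAt_id x).sub_const c
      have hlin : HasDerivAt (fun y => 1 + v * (y - xN) - (ε / 2 * β + α * (y - c)))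
          (v - α) x := by
        have := ((hd1.const_mul v).const_add 1).sub ((hd2.const_mul α).const_add (ε / 2 * β))
        simp only [mul_one] at this; exact this
      apply hlin.congr_of_eventuallyEq
      filter_upwards [Ioo_mem_nhds h hxr] with y hy
      rw [hnH y ⟨by linarith [hy.1, hxNc], hy.2.le⟩]
      simp only [hH]
      rw [if_neg (not_le.2 hy.1)]
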